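/- Let 0 < q₁ < p₁ ≤ 1, 0 < q₂ < p₂ ≤ 1, let n, m ≥ 1, and let f : [0,1]² → ℝ be continuously differentiable on [0,1]². Then for every (x,y) ∈ [0,1]², |B_{n,m}(f;x,y) - f(x,y)| ≤ ‖∂f/∂x‖_∞ √( (p₁^{n-1}/[n]_{p₁,q₁})(x - x²) ) + ‖∂f/∂y‖_∞ √( (p₂^{m-1}/[m]_{p₂,q₂})(y - y²) ), where ‖·‖_∞ denotes the supremum norm over [0,1]². -/

import Mathlib

open Finset Set Filter Topology

/-- The (p,q)-integer `[n]_{p,q} = ∑_{i=0}^{n-1} p^(n-1-i) q^i`. -/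
noncomputable def pqInt (p q : ℝ) (n : ℕ) : ℝ :=
  ∑ i ∈ Finset.range n, p ^ (n - 1 - i) * q ^ i

/-- The (p,q)-factorial `[n]_{p,q}! = ∏_{j=1}^n [j]_{p,q}`. -/
noncomputable def pqFactorial (p q : ℝ) (n : ℕ) : ℝ :=
  ∏ j ∈ Finset.range n, pqInt p q (j + 1)

/-- The (p,q)-binomial coefficient. -/
noncomputable def pqChoose (p q : ℝ) (n k : ℕ) : ℝ :=
  pqFactorial p q n / (pqFactorial p q k * pqFactorial p q (n - k))

/-- The node `p^(n-k) [k]_{p,q} / [n]_{p,q}` of the (p,q)-Bernstein operator. -/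
noncomputable def pqNode (p q : ℝ) (n k : ℕ) : ℝ :=
  p ^ (n - k) * pqInt p q k / pqInt p q n

/-- The basis function
`p^((k(k-1)-n(n-1))/2) C(n,k)_{p,q} x^k ∏_{s=0}^{n-k-1} (p^s - q^s x)`,
where `p^((k(k-1)-n(n-1))/2)` is written as `p^(k(k-1)/2) / p^(n(n-1)/2)`. -/
noncomputable def pqBasis (p q : ℝ) (n k : ℕ) (x : ℝ) : ℝ :=
  (p ^ (k.choose 2) / p ^ (n.choose 2)) * pqChoose p q n k * x ^ k *
    ∏ s ∈ Finset.range (n - k), (p ^ s - q ^ s * x)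

/-- The (p,q)-Bernstein operator `B_{n,p,q}(f;x)`. -/
noncomputable def pqBernstein (p q : ℝ) (n : ℕ) (f : ℝ → ℝ) (x : ℝ) : ℝ :=
  ∑ k ∈ Finset.range (n + 1), pqBasis p q n k x * f (pqNode p q n k)

/-- The bivariate (p,q)-Bernstein operator
`B_{n,m}^{(p₁,q₁),(p₂,q₂)}(f;x,y)`. -/
noncomputable def pqBernstein2 (p₁ q₁ p₂ q₂ : ℝ) (n m : ℕ)
    (f : ℝ → ℝ → ℝ) (x y : ℝ) : ℝ :=
  ∑ k ∈ Finset.range (n + 1), ∑ j ∈ Finset.range (m + 1),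
    pqBasis p₁ q₁ n k x * pqBasis p₂ q₂ m j y *
      f (pqNode p₁ q₁ n k) (pqNode p₂ q₂ m j)

/-- The partial derivative with respect to the first variable. -/
noncomputable def pdx (g : ℝ → ℝ → ℝ) : ℝ → ℝ → ℝ :=
  fun x y => deriv (fun u => g u y) x

/-- The partial derivative with respect to the second variable. -/
noncomputable def pdy (g : ℝ → ℝ → ℝ) : ℝ → ℝ → ℝ :=
  fun x y => deriv (fun v => g x v) y

/-- The supremum norm of a bivariate function over `[0,1]²`. -/
noncomputable def supNorm2 (g : ℝ → ℝ → ℝ) : ℝ :=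
  sSup {d : ℝ | ∃ x ∈ Set.Icc (0 : ℝ) 1, ∃ y ∈ Set.Icc (0 : ℝ) 1, d = |g x y|}

variable {p q x : ℝ} {n k : ℕ}

lemma pqInt_pos (hp : 0 < p) (hq : 0 < q) (hn : 0 < n) : 0 < pqInt p q n := by
  apply Finset.sum_pos (fun i _ => by positivity)
  exact Finset.nonempty_range_iff.mpr hn.ne'

lemma pqInt_succ_right : pqInt p q (n + 1) = q ^ n + p * pqInt p q n := by
  unfold pqInt
  rw [Finset.sum_range_succ, Finset.mul_sum]
  simp only [Nat.add_sub_cancel]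
  rw [add_comm]
  congr 1
  · simp
  · apply Finset.sum_congr rfl
    intro i hi
    rw [Finset.mem_range] at hi
    have h : n - i = (n - 1 - i) + 1 := by omega
    rw [h, pow_succ]
    ring

lemma pqInt_succ_left : pqInt p q (n + 1) = p ^ n + q * pqInt p q n := by
  unfold pqInt
  rw [Finset.sum_range_succ', Finset.mul_sum]
  simp only [Nat.add_sub_cancel]
  rw [add_comm]
  congr 1
  · simp
  · apply Finset.sum_congr rfl
    intro i hi
    rw [Finset.mem_range] at hi
    have h : n - (i + 1) = n - 1 - i := by omega
    rw [h, pow_succ]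
    ring

lemma pqInt_split (hk : k ≤ n) :
    pqInt p q n = p ^ k * pqInt p q (n - k) + q ^ (n - k) * pqInt p q k := by
  obtain ⟨a, rfl⟩ : ∃ a, n = a + k := ⟨n - k, by omega⟩
  simp only [pqInt, Nat.add_sub_cancel]
  rw [Finset.sum_range_add, Finset.mul_sum, Finset.mul_sum]
  congr 1
  · apply Finset.sum_congr rfl
    intro i hi
    rw [Finset.mem_range] at hi
    have h : a + k - 1 - i = k + (a - 1 - i) := by omega
    rw [h, pow_add]
    ring
  · apply Finset.sum_congr rfl
    intro j hj
    rw [Finset.mem_range] at hj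
    have h : a + k - 1 - (a + j) = k - 1 - j := by omega
    rw [h, pow_add]
    ring

lemma pqFactorial_succ : pqFactorial p q (n + 1) = pqFactorial p q n * pqInt p q (n + 1) :=
  Finset.prod_range_succ _ _

lemma pqFactorial_pos (hp : 0 < p) (hq : 0 < q) : 0 < pqFactorial p q n :=
  Finset.prod_pos fun j _ => pqInt_pos hp hq (Nat.succ_pos j)

lemma pqChoose_zero (hp : 0 < p) (hq : 0 < q) : pqChoose p q n 0 = 1 := by
  have h : pqFactorial p q 0 = 1 := by simp [pqFactorial]
  rw [pqChoose, Nat.sub_zero, h, one_mul, div_self (pqFactorial_pos hp hq).ne']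

lemma pqChoose_self (hp : 0 < p) (hq : 0 < q) : pqChoose p q n n = 1 := by
  have h : pqFactorial p q 0 = 1 := by simp [pqFactorial]
  rw [pqChoose, Nat.sub_self, h, mul_one, div_self (pqFactorial_pos hp hq).ne']

lemma pqChoose_pascal (hp : 0 < p) (hq : 0 < q) (hk : k < n) :
    pqChoose p q (n + 1) (k + 1)
      = q ^ (n - k) * pqChoose p q n k + p ^ (k + 1) * pqChoose p q n (k + 1) := by
  have h1 : n + 1 - (k + 1) = n - k := by omega
  have h2 : n - k = (n - (k + 1)) + 1 := by omega
  have hsplit : pqInt p q (n + 1)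
      = p ^ (k + 1) * pqInt p q (n - k) + q ^ (n - k) * pqInt p q (k + 1) := by
    have := pqInt_split (p := p) (q := q) (k := k + 1) (n := n + 1) (by omega)
    rwa [h1] at this
  unfold pqChoose
  rw [h1, pqFactorial_succ (n := n), pqFactorial_succ (n := k), h2,
    pqFactorial_succ (n := n - (k + 1)), ← h2, hsplit]
  have f1 := (pqFactorial_pos hp hq (n := n)).ne'
  have f2 := (pqFactorial_pos hp hq (n := k)).ne'
  have f3 := (pqFactorial_pos hp hq (n := n - (k + 1))).ne'
  have f4 := (pqInt_pos hp hq (n := k + 1) (by omega)).ne'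
  have f5 := (pqInt_pos hp hq (n := n - k) (by omega)).ne'
  field_simp
  ring

lemma pqChoose_absorb (hp : 0 < p) (hq : 0 < q) (hk : k ≤ n) :
    pqChoose p q (n + 1) (k + 1) * pqInt p q (k + 1)
      = pqInt p q (n + 1) * pqChoose p q n k := by
  have h1 : n + 1 - (k + 1) = n - k := by omega
  unfold pqChoose
  rw [h1, pqFactorial_succ (n := n), pqFactorial_succ (n := k)]
  have f1 := (pqFactorial_pos hp hq (n := n)).ne'
  have f2 := (pqFactorial_pos hp hq (n := k)).ne'
  have f3 := (pqFactorial_pos hp hq (n := n - k)).ne'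
  have f4 := (pqInt_pos hp hq (n := k + 1) (by omega)).ne'
  field_simp

/-- The unnormalized basis. -/
noncomputable def pqB (p q : ℝ) (n k : ℕ) (x : ℝ) : ℝ :=
  p ^ (k.choose 2) * pqChoose p q n k * x ^ k *
    ∏ s ∈ Finset.range (n - k), (p ^ s - q ^ s * x)

lemma choose_two_succ (k : ℕ) : (k + 1).choose 2 = k.choose 2 + k := by
  rw [show (2 : ℕ) = 1 + 1 from rfl, Nat.choose_succ_succ]
  simp [Nat.choose_one_right, Nat.add_comm]

lemma pqB_zero_left (hp : 0 < p) (hq : 0 < q) :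
    pqB p q n 0 x = ∏ s ∈ Finset.range n, (p ^ s - q ^ s * x) := by
  simp [pqB, pqChoose_zero hp hq]

lemma pqB_self (hp : 0 < p) (hq : 0 < q) :
    pqB p q n n x = p ^ (n.choose 2) * x ^ n := by
  simp [pqB, pqChoose_self hp hq]

/-- Master recursion for weighted sums of the unnormalized basis. -/
lemma pqB_master (hp : 0 < p) (hq : 0 < q) (g : ℕ → ℝ) (n : ℕ) (x : ℝ) :
    ∑ k ∈ Finset.range (n + 2), pqB p q (n + 1) k x * g k
      = ∑ k ∈ Finset.range (n + 1), pqB p q n k x *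
          ((p ^ n - p ^ k * q ^ (n - k) * x) * g k + x * p ^ k * q ^ (n - k) * g (k + 1)) := by
  have hA : ∀ k, k ≤ n → pqB p q n k x * (x * p ^ k * q ^ (n - k) * g (k + 1))
      = (p ^ ((k + 1).choose 2) * (q ^ (n - k) * pqChoose p q n k) * x ^ (k + 1) *
          ∏ s ∈ Finset.range (n - k), (p ^ s - q ^ s * x)) * g (k + 1) := by
    intro k hk
    rw [choose_two_succ, pow_add, pqB, pow_succ]
    ring
  have hB : ∀ k, k + 1 ≤ n → pqB p q n (k + 1) x *
        ((p ^ n - p ^ (k + 1) * q ^ (n - (k + 1)) * x) * g (k + 1))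
      = (p ^ ((k + 1).choose 2) * (p ^ (k + 1) * pqChoose p q n (k + 1)) * x ^ (k + 1) *
          ∏ s ∈ Finset.range (n - k), (p ^ s - q ^ s * x)) * g (k + 1) := by
    intro k hk
    have h2 : n - k = (n - (k + 1)) + 1 := by omega
    have h3 : p ^ (k + 1) * p ^ (n - (k + 1)) = p ^ n := by
      rw [← pow_add]; congr 1; omega
    rw [pqB, h2, Finset.prod_range_succ, ← h3]
    ring
  -- peel off the first term of LHS
  rw [Finset.sum_range_succ' (fun k => pqB p q (n + 1) k x * g k) (n + 1)]
  -- and split the middle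
  rw [Finset.sum_range_succ (fun k => pqB p q (n + 1) (k + 1) x * g (k + 1)) n]
  have key : ∀ k, k < n →
      pqB p q (n + 1) (k + 1) x * g (k + 1)
        = pqB p q n k x * (x * p ^ k * q ^ (n - k) * g (k + 1))
          + pqB p q n (k + 1) x *
            ((p ^ n - p ^ (k + 1) * q ^ (n - (k + 1)) * x) * g (k + 1)) := by
    intro k hk
    rw [hA k hk.le, hB k hk]
    rw [pqB, pqChoose_pascal hp hq hk]
    have : n + 1 - (k + 1) = n - k := by omega
    rw [this]
    ring
  have hbound0 : pqB p q (n + 1) 0 x * g 0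
      = pqB p q n 0 x * ((p ^ n - p ^ 0 * q ^ (n - 0) * x) * g 0) := by
    rw [pqB_zero_left hp hq, pqB_zero_left hp hq, Finset.prod_range_succ]
    simp only [Nat.sub_zero, pow_zero]
    ring
  have hboundtop : pqB p q (n + 1) (n + 1) x * g (n + 1)
      = pqB p q n n x * (x * p ^ n * q ^ (n - n) * g (n + 1)) := by
    rw [pqB_self hp hq, pqB_self hp hq, choose_two_succ, pow_add]
    simp only [Nat.sub_self, pow_zero]
    ring
  rw [show (∑ k ∈ Finset.range n, pqB p q (n + 1) (k + 1) x * g (k + 1))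
      = ∑ k ∈ Finset.range n, (pqB p q n k x * (x * p ^ k * q ^ (n - k) * g (k + 1))
          + pqB p q n (k + 1) x * ((p ^ n - p ^ (k + 1) * q ^ (n - (k + 1)) * x) * g (k + 1)))
    from Finset.sum_congr rfl (fun k hk => key k (Finset.mem_range.mp hk)),
    Finset.sum_add_distrib, hbound0, hboundtop]
  simp only [mul_add]
  rw [Finset.sum_add_distrib,
    Finset.sum_range_succ' (fun k => pqB p q n k x * ((p ^ n - p ^ k * q ^ (n - k) * x) * g k)) n,
    Finset.sum_range_succ (fun k => pqB p q n k x * (x * p ^ k * q ^ (n - k) * g (k + 1))) n]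
  ring

lemma sum_pqB (hp : 0 < p) (hq : 0 < q) (n : ℕ) (x : ℝ) :
    ∑ k ∈ Finset.range (n + 1), pqB p q n k x = p ^ (n.choose 2) := by
  induction n with
  | zero => simp [pqB, pqChoose_self hp hq]
  | succ n ih =>
    have h := pqB_master hp hq (fun _ => 1) n x
    simp only [mul_one] at h
    rw [show n + 1 + 1 = n + 2 from rfl, h]
    have : ∀ k ∈ Finset.range (n + 1),
        pqB p q n k x * ((p ^ n - p ^ k * q ^ (n - k) * x) + x * p ^ k * q ^ (n - k))
          = pqB p q n k x * p ^ n := by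
      intro k _; ring
    rw [Finset.sum_congr rfl this, ← Finset.sum_mul, ih, choose_two_succ, pow_add]

lemma sum_pqB_D (hp : 0 < p) (hq : 0 < q) (n : ℕ) (x : ℝ) :
    ∑ k ∈ Finset.range (n + 1), pqB p q n k x * (q ^ k * p ^ (n - k))
      = p ^ (n.choose 2) * (p ^ n - (p ^ n - q ^ n) * x) := by
  induction n with
  | zero => simp [pqB, pqChoose_self hp hq]
  | succ n ih =>
    have h := pqB_master hp hq (fun k => q ^ k * p ^ (n + 1 - k)) n x
    rw [show n + 1 + 1 = n + 2 from rfl, h]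
    have key : ∀ k ∈ Finset.range (n + 1),
        pqB p q n k x * ((p ^ n - p ^ k * q ^ (n - k) * x) * (q ^ k * p ^ (n + 1 - k))
            + x * p ^ k * q ^ (n - k) * (q ^ (k + 1) * p ^ (n + 1 - (k + 1))))
          = (p * p ^ n) * (pqB p q n k x * (q ^ k * p ^ (n - k)))
            + (x * p ^ n * (q * q ^ n) - x * q ^ n * (p * p ^ n)) * pqB p q n k x := by
      intro k hk
      rw [Finset.mem_range] at hk
      have e1 : n + 1 - k = (n - k) + 1 := by omega
      have e2 : n + 1 - (k + 1) = n - k := by omega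
      have e3 : p ^ k * p ^ (n - k) = p ^ n := by rw [← pow_add]; congr 1; omega
      have e4 : q ^ k * q ^ (n - k) = q ^ n := by rw [← pow_add]; congr 1; omega
      rw [e1, e2, pow_succ]
      rw [← e3, ← e4]
      ring
    rw [Finset.sum_congr rfl key, Finset.sum_add_distrib, ← Finset.mul_sum, ← Finset.mul_sum,
      ih, sum_pqB hp hq, choose_two_succ, pow_add, pow_succ, pow_succ]
    ring

lemma sum_pqB_U1 (hp : 0 < p) (hq : 0 < q) (n : ℕ) (x : ℝ) :
    ∑ k ∈ Finset.range (n + 1), pqB p q n k x * (p ^ (n - k) * pqInt p q k)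
      = x * pqInt p q n * p ^ (n.choose 2) := by
  induction n with
  | zero => simp [pqB, pqInt]
  | succ n _ =>
    rw [Finset.sum_range_succ'
      (fun k => pqB p q (n + 1) k x * (p ^ (n + 1 - k) * pqInt p q k)) (n + 1)]
    have h0 : pqInt p q 0 = 0 := by simp [pqInt]
    rw [h0]
    have key : ∀ k ∈ Finset.range (n + 1),
        pqB p q (n + 1) (k + 1) x * (p ^ (n + 1 - (k + 1)) * pqInt p q (k + 1))
          = (x * pqInt p q (n + 1)) * (pqB p q n k x * p ^ n) := by
      intro k hk
      rw [Finset.mem_range] at hk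
      have e2 : n + 1 - (k + 1) = n - k := by omega
      have e3 : p ^ k * p ^ (n - k) = p ^ n := by rw [← pow_add]; congr 1; omega
      have habs := pqChoose_absorb hp hq (k := k) (n := n) (Nat.lt_succ_iff.mp hk)
      rw [pqB, pqB, e2, choose_two_succ, pow_add]
      linear_combination
        (p ^ k.choose 2 * p ^ k * x ^ (k + 1) *
            (∏ s ∈ Finset.range (n - k), (p ^ s - q ^ s * x)) * p ^ (n - k)) * habs
          + (x * pqInt p q (n + 1) * p ^ k.choose 2 * pqChoose p q n k * x ^ k *
            (∏ s ∈ Finset.range (n - k), (p ^ s - q ^ s * x))) * e3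
    rw [Finset.sum_congr rfl key, ← Finset.mul_sum, ← Finset.sum_mul, sum_pqB hp hq,
      choose_two_succ, pow_add]
    ring

lemma sum_pqB_U2 (hp : 0 < p) (hq : 0 < q) (n : ℕ) (x : ℝ) :
    ∑ k ∈ Finset.range (n + 2), pqB p q (n + 1) k x * (p ^ (n + 1 - k) * pqInt p q k) ^ 2
      = x * pqInt p q (n + 1) * p ^ n *
          (p ^ (n.choose 2) * (p ^ n - (p ^ n - q ^ n) * x)
            + p * (x * pqInt p q n * p ^ (n.choose 2))) := by
  rw [Finset.sum_range_succ'
    (fun k => pqB p q (n + 1) k x * (p ^ (n + 1 - k) * pqInt p q k) ^ 2) (n + 1)]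
  have h0 : pqInt p q 0 = 0 := by simp [pqInt]
  rw [h0]
  have key : ∀ k ∈ Finset.range (n + 1),
      pqB p q (n + 1) (k + 1) x * (p ^ (n + 1 - (k + 1)) * pqInt p q (k + 1)) ^ 2
        = (x * pqInt p q (n + 1) * p ^ n) *
            (pqB p q n k x * (q ^ k * p ^ (n - k))
              + p * (pqB p q n k x * (p ^ (n - k) * pqInt p q k))) := by
    intro k hk
    rw [Finset.mem_range] at hk
    have e2 : n + 1 - (k + 1) = n - k := by omega
    have e3 : p ^ k * p ^ (n - k) = p ^ n := by rw [← pow_add]; congr 1; omega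
    have habs := pqChoose_absorb hp hq (k := k) (n := n) (Nat.lt_succ_iff.mp hk)
    have hsucc : pqInt p q (k + 1) = q ^ k + p * pqInt p q k := pqInt_succ_right
    rw [hsucc] at habs
    rw [pqB, pqB, e2, choose_two_succ, pow_add, hsucc]
    linear_combination
      (p ^ k.choose 2 * p ^ k * x ^ (k + 1) *
          (∏ s ∈ Finset.range (n - k), (p ^ s - q ^ s * x)) * p ^ (n - k) * p ^ (n - k) *
          (q ^ k + p * pqInt p q k)) * habs
        + (p ^ k.choose 2 * x ^ (k + 1) *
          (∏ s ∈ Finset.range (n - k), (p ^ s - q ^ s * x)) * p ^ (n - k) *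
          (q ^ k + p * pqInt p q k) * pqInt p q (n + 1) * pqChoose p q n k) * e3
  rw [Finset.sum_congr rfl key, ← Finset.mul_sum, Finset.sum_add_distrib, ← Finset.mul_sum,
    sum_pqB_D hp hq, sum_pqB_U1 hp hq]
  ring

lemma pqBasis_eq : pqBasis p q n k x = pqB p q n k x / p ^ (n.choose 2) := by
  unfold pqBasis pqB; ring

lemma sum_pqBasis (hp : 0 < p) (hq : 0 < q) (n : ℕ) (x : ℝ) :
    ∑ k ∈ Finset.range (n + 1), pqBasis p q n k x = 1 := by
  simp only [pqBasis_eq]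
  rw [← Finset.sum_div, sum_pqB hp hq, div_self (pow_ne_zero _ hp.ne')]

lemma pqChoose_pos (hp : 0 < p) (hq : 0 < q) : 0 < pqChoose p q n k :=
  div_pos (pqFactorial_pos hp hq) (mul_pos (pqFactorial_pos hp hq) (pqFactorial_pos hp hq))

lemma pqBasis_nonneg (hq : 0 < q) (hqp : q < p) (hx0 : 0 ≤ x) (hx1 : x ≤ 1) :
    0 ≤ pqBasis p q n k x := by
  have hp : 0 < p := hq.trans hqp
  apply mul_nonneg (mul_nonneg (mul_nonneg _ (pqChoose_pos hp hq).le) (pow_nonneg hx0 k))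
  · apply Finset.prod_nonneg
    intro s _
    have h1 : q ^ s * x ≤ q ^ s * 1 := mul_le_mul_of_nonneg_left hx1 (pow_nonneg hq.le s)
    have h2 : q ^ s ≤ p ^ s := pow_le_pow_left₀ hq.le hqp.le s
    simp only [mul_one] at h1
    linarith
  · positivity

lemma pqNode_mem (hp : 0 < p) (hq : 0 < q) (hn : 0 < n) (hk : k ≤ n) :
    pqNode p q n k ∈ Set.Icc (0 : ℝ) 1 := by
  have hN := pqInt_pos (p := p) (q := q) hp hq hn
  constructor
  · rw [pqNode]
    apply div_nonneg _ hN.le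
    have : 0 ≤ pqInt p q k := by
      unfold pqInt
      exact Finset.sum_nonneg fun i _ => by positivity
    positivity
  · rw [pqNode, div_le_one hN]
    have hsplit := pqInt_split (p := p) (q := q) (k := n - k) (n := n) (Nat.sub_le n k)
    have e : n - (n - k) = k := by omega
    rw [e] at hsplit
    have : 0 ≤ q ^ k * pqInt p q (n - k) := by
      have : 0 ≤ pqInt p q (n - k) := by
        unfold pqInt
        exact Finset.sum_nonneg fun i _ => by positivity
      positivity
    linarith [hsplit]

lemma sum_pqBasis_var (hp : 0 < p) (hq : 0 < q) (n : ℕ) (x : ℝ) :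
    ∑ k ∈ Finset.range (n + 2), pqBasis p q (n + 1) k x * (pqNode p q (n + 1) k - x) ^ 2
      = (p ^ n / pqInt p q (n + 1)) * (x - x ^ 2) := by
  have hN := pqInt_pos (p := p) (q := q) hp hq (Nat.succ_pos n)
  have hc : (0:ℝ) < p ^ ((n+1).choose 2) := by positivity
  have hsummand : ∀ k ∈ Finset.range (n + 2),
      pqBasis p q (n + 1) k x * (pqNode p q (n + 1) k - x) ^ 2
        = (1 / (p ^ ((n+1).choose 2) * pqInt p q (n + 1) ^ 2)) *
              (pqB p q (n + 1) k x * (p ^ (n + 1 - k) * pqInt p q k) ^ 2)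
            - (2 * x / (p ^ ((n+1).choose 2) * pqInt p q (n + 1))) *
              (pqB p q (n + 1) k x * (p ^ (n + 1 - k) * pqInt p q k))
            + (x ^ 2 / p ^ ((n+1).choose 2)) * pqB p q (n + 1) k x := by
    intro k _
    rw [pqBasis_eq, pqNode]
    field_simp
    ring
  rw [Finset.sum_congr rfl hsummand]
  rw [Finset.sum_add_distrib, Finset.sum_sub_distrib, ← Finset.mul_sum, ← Finset.mul_sum,
    ← Finset.mul_sum, sum_pqB_U2 hp hq, sum_pqB_U1 hp hq, sum_pqB hp hq]
  have hsucc : pqInt p q (n + 1) = q ^ n + p * pqInt p q n := pqInt_succ_right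
  have hch : (n + 1).choose 2 = n.choose 2 + n := choose_two_succ n
  rw [hsucc, hch, pow_add]
  have h1 : (0:ℝ) < q ^ n + p * pqInt p q n := by rw [← hsucc]; exact hN
  field_simp
  ring

lemma weighted_abs_le_sqrt {s : Finset ℕ} {w d : ℕ → ℝ}
    (hw : ∀ k ∈ s, 0 ≤ w k) (hsum : ∑ k ∈ s, w k = 1) :
    ∑ k ∈ s, w k * |d k| ≤ Real.sqrt (∑ k ∈ s, w k * d k ^ 2) := by
  have h := Finset.sum_mul_sq_le_sq_mul_sq s (fun k => Real.sqrt (w k))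
    (fun k => Real.sqrt (w k) * |d k|)
  have e1 : ∀ k ∈ s, Real.sqrt (w k) * (Real.sqrt (w k) * |d k|) = w k * |d k| :=
    fun k hk => by rw [← mul_assoc, Real.mul_self_sqrt (hw k hk)]
  have e2 : ∀ k ∈ s, Real.sqrt (w k) ^ 2 = w k := fun k hk => Real.sq_sqrt (hw k hk)
  have e3 : ∀ k ∈ s, (Real.sqrt (w k) * |d k|) ^ 2 = w k * d k ^ 2 := by
    intro k hk; rw [mul_pow, Real.sq_sqrt (hw k hk), sq_abs]
  rw [Finset.sum_congr rfl e1, Finset.sum_congr rfl e2, Finset.sum_congr rfl e3, hsum,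
    one_mul] at h
  have hnn : 0 ≤ ∑ k ∈ s, w k * |d k| :=
    Finset.sum_nonneg fun k hk => mul_nonneg (hw k hk) (abs_nonneg _)
  calc ∑ k ∈ s, w k * |d k| = Real.sqrt ((∑ k ∈ s, w k * |d k|) ^ 2) :=
        (Real.sqrt_sq hnn).symm
    _ ≤ Real.sqrt (∑ k ∈ s, w k * d k ^ 2) := Real.sqrt_le_sqrt h

lemma le_supNorm2 {g : ℝ → ℝ → ℝ}
    (hg : ContinuousOn (fun z : ℝ × ℝ => g z.1 z.2) (Set.Icc 0 1 ×ˢ Set.Icc 0 1))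
    {u v : ℝ} (hu : u ∈ Set.Icc (0:ℝ) 1) (hv : v ∈ Set.Icc (0:ℝ) 1) :
    |g u v| ≤ supNorm2 g := by
  have hset : {d : ℝ | ∃ x ∈ Set.Icc (0:ℝ) 1, ∃ y ∈ Set.Icc (0:ℝ) 1, d = |g x y|}
      = (fun z : ℝ × ℝ => |g z.1 z.2|) '' (Set.Icc 0 1 ×ˢ Set.Icc 0 1) := by
    ext d
    constructor
    · rintro ⟨a, ha, b, hb, rfl⟩; exact ⟨(a, b), ⟨ha, hb⟩, rfl⟩
    · rintro ⟨⟨a, b⟩, ⟨ha, hb⟩, rfl⟩; exact ⟨a, ha, b, hb, rfl⟩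
  have hcomp : IsCompact ((fun z : ℝ × ℝ => |g z.1 z.2|) '' (Set.Icc 0 1 ×ˢ Set.Icc 0 1)) :=
    (isCompact_Icc.prod isCompact_Icc).image_of_continuousOn hg.abs
  exact le_csSup (hset ▸ hcomp.bddAbove) ⟨u, hu, v, hv, rfl⟩

lemma mvt_Icc {g : ℝ → ℝ} {M : ℝ}
    (hdiff : ∀ t ∈ Set.Icc (0:ℝ) 1, DifferentiableAt ℝ g t)
    (hM : ∀ t ∈ Set.Icc (0:ℝ) 1, |deriv g t| ≤ M)
    {a b : ℝ} (ha : a ∈ Set.Icc (0:ℝ) 1) (hb : b ∈ Set.Icc (0:ℝ) 1) :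
    |g b - g a| ≤ M * |b - a| := by
  have h := Convex.norm_image_sub_le_of_norm_hasDerivWithin_le
    (f := g) (f' := deriv g) (s := Set.Icc 0 1)
    (fun t ht => (hdiff t ht).hasDerivAt.hasDerivWithinAt)
    (fun t ht => by simpa using hM t ht) (convex_Icc 0 1) ha hb
  simpa [Real.norm_eq_abs] using h

theorem pqBernstein2_rate_C1 (p₁ q₁ p₂ q₂ : ℝ) (n m : ℕ)
    (hq₁ : 0 < q₁) (hq₁p₁ : q₁ < p₁) (hp₁ : p₁ ≤ 1)
    (hq₂ : 0 < q₂) (hq₂p₂ : q₂ < p₂) (hp₂ : p₂ ≤ 1)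
    (hn : 1 ≤ n) (hm : 1 ≤ m) (f : ℝ → ℝ → ℝ)
    (hf : ContinuousOn (fun z : ℝ × ℝ => f z.1 z.2)
      (Set.Icc (0 : ℝ) 1 ×ˢ Set.Icc (0 : ℝ) 1))
    (hdiff : ∀ x ∈ Set.Icc (0 : ℝ) 1, ∀ y ∈ Set.Icc (0 : ℝ) 1,
      DifferentiableAt ℝ (fun u => f u y) x ∧ DifferentiableAt ℝ (fun v => f x v) y)
    (hfx : ContinuousOn (fun z : ℝ × ℝ => pdx f z.1 z.2)
      (Set.Icc (0 : ℝ) 1 ×ˢ Set.Icc (0 : ℝ) 1))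
    (hfy : ContinuousOn (fun z : ℝ × ℝ => pdy f z.1 z.2)
      (Set.Icc (0 : ℝ) 1 ×ˢ Set.Icc (0 : ℝ) 1))
    (x y : ℝ) (hx : x ∈ Set.Icc (0 : ℝ) 1) (hy : y ∈ Set.Icc (0 : ℝ) 1) :
    |pqBernstein2 p₁ q₁ p₂ q₂ n m f x y - f x y| ≤
      supNorm2 (pdx f) * Real.sqrt ((p₁ ^ (n - 1) / pqInt p₁ q₁ n) * (x - x ^ 2)) +
      supNorm2 (pdy f) * Real.sqrt ((p₂ ^ (m - 1) / pqInt p₂ q₂ m) * (y - y ^ 2)) := by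
  obtain ⟨n', rfl⟩ : ∃ n', n = n' + 1 := ⟨n - 1, by omega⟩
  obtain ⟨m', rfl⟩ : ∃ m', m = m' + 1 := ⟨m - 1, by omega⟩
  have hp₁' : 0 < p₁ := hq₁.trans hq₁p₁
  have hp₂' : 0 < p₂ := hq₂.trans hq₂p₂
  have hMx : ∀ u ∈ Set.Icc (0:ℝ) 1, ∀ v ∈ Set.Icc (0:ℝ) 1,
      |pdx f u v| ≤ supNorm2 (pdx f) := fun u hu v hv => le_supNorm2 hfx hu hv
  have hMy : ∀ u ∈ Set.Icc (0:ℝ) 1, ∀ v ∈ Set.Icc (0:ℝ) 1,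
      |pdy f u v| ≤ supNorm2 (pdy f) := fun u hu v hv => le_supNorm2 hfy hu hv
  have h01 : (0:ℝ) ∈ Set.Icc (0:ℝ) 1 := by norm_num
  have hMx0 : 0 ≤ supNorm2 (pdx f) := le_trans (abs_nonneg _) (hMx 0 h01 0 h01)
  have hMy0 : 0 ≤ supNorm2 (pdy f) := le_trans (abs_nonneg _) (hMy 0 h01 0 h01)
  have hpt : ∀ a ∈ Set.Icc (0:ℝ) 1, ∀ b ∈ Set.Icc (0:ℝ) 1,
      |f a b - f x y| ≤ supNorm2 (pdx f) * |a - x| + supNorm2 (pdy f) * |b - y| := by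
    intro a ha b hb
    have h1 : |f a b - f x b| ≤ supNorm2 (pdx f) * |a - x| :=
      mvt_Icc (g := fun u => f u b) (fun t ht => (hdiff t ht b hb).1)
        (fun t ht => hMx t ht b hb) hx ha
    have h2 : |f x b - f x y| ≤ supNorm2 (pdy f) * |b - y| :=
      mvt_Icc (g := fun v => f x v) (fun t ht => (hdiff x hx t ht).2)
        (fun t ht => hMy x hx t ht) hy hb
    calc |f a b - f x y| = |(f a b - f x b) + (f x b - f x y)| := by
          rw [sub_add_sub_cancel]
      _ ≤ |f a b - f x b| + |f x b - f x y| := abs_add_le _ _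
      _ ≤ _ := add_le_add h1 h2
  -- weights
  have hwx : ∀ k ∈ Finset.range (n' + 2), 0 ≤ pqBasis p₁ q₁ (n' + 1) k x :=
    fun k _ => pqBasis_nonneg hq₁ hq₁p₁ hx.1 hx.2
  have hwy : ∀ j ∈ Finset.range (m' + 2), 0 ≤ pqBasis p₂ q₂ (m' + 1) j y :=
    fun j _ => pqBasis_nonneg hq₂ hq₂p₂ hy.1 hy.2
  have hswx : ∑ k ∈ Finset.range (n' + 2), pqBasis p₁ q₁ (n' + 1) k x = 1 :=
    sum_pqBasis hp₁' hq₁ (n' + 1) x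
  have hswy : ∑ j ∈ Finset.range (m' + 2), pqBasis p₂ q₂ (m' + 1) j y = 1 :=
    sum_pqBasis hp₂' hq₂ (m' + 1) y
  have hnx : ∀ k ∈ Finset.range (n' + 2), pqNode p₁ q₁ (n' + 1) k ∈ Set.Icc (0:ℝ) 1 :=
    fun k hk => pqNode_mem hp₁' hq₁ (Nat.succ_pos n')
      (Nat.lt_succ_iff.mp (Finset.mem_range.mp hk))
  have hny : ∀ j ∈ Finset.range (m' + 2), pqNode p₂ q₂ (m' + 1) j ∈ Set.Icc (0:ℝ) 1 :=
    fun j hj => pqNode_mem hp₂' hq₂ (Nat.succ_pos m')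
      (Nat.lt_succ_iff.mp (Finset.mem_range.mp hj))
  -- decomposition of the error
  have hBf : pqBernstein2 p₁ q₁ p₂ q₂ (n' + 1) (m' + 1) f x y - f x y
      = ∑ k ∈ Finset.range (n' + 2), ∑ j ∈ Finset.range (m' + 2),
          pqBasis p₁ q₁ (n' + 1) k x * pqBasis p₂ q₂ (m' + 1) j y *
            (f (pqNode p₁ q₁ (n' + 1) k) (pqNode p₂ q₂ (m' + 1) j) - f x y) := by
    simp only [pqBernstein2, mul_sub, Finset.sum_sub_distrib]
    have hinner : ∀ k ∈ Finset.range (n' + 2),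
        ∑ j ∈ Finset.range (m' + 2),
          pqBasis p₁ q₁ (n' + 1) k x * pqBasis p₂ q₂ (m' + 1) j y * f x y
          = pqBasis p₁ q₁ (n' + 1) k x * f x y := by
      intro k _
      rw [← Finset.sum_mul, ← Finset.mul_sum, hswy, mul_one]
    rw [Finset.sum_congr rfl hinner, ← Finset.sum_mul, hswx, one_mul]
  -- Cauchy–Schwarz bounds
  have hCSx : ∑ k ∈ Finset.range (n' + 2),
        pqBasis p₁ q₁ (n' + 1) k x * |pqNode p₁ q₁ (n' + 1) k - x|
      ≤ Real.sqrt ((p₁ ^ n' / pqInt p₁ q₁ (n' + 1)) * (x - x ^ 2)) := by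
    have h := weighted_abs_le_sqrt (s := Finset.range (n' + 2))
      (w := fun k => pqBasis p₁ q₁ (n' + 1) k x)
      (d := fun k => pqNode p₁ q₁ (n' + 1) k - x) hwx hswx
    rwa [sum_pqBasis_var hp₁' hq₁] at h
  have hCSy : ∑ j ∈ Finset.range (m' + 2),
        pqBasis p₂ q₂ (m' + 1) j y * |pqNode p₂ q₂ (m' + 1) j - y|
      ≤ Real.sqrt ((p₂ ^ m' / pqInt p₂ q₂ (m' + 1)) * (y - y ^ 2)) := by
    have h := weighted_abs_le_sqrt (s := Finset.range (m' + 2))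
      (w := fun j => pqBasis p₂ q₂ (m' + 1) j y)
      (d := fun j => pqNode p₂ q₂ (m' + 1) j - y) hwy hswy
    rwa [sum_pqBasis_var hp₂' hq₂] at h
  have e1 : n' + 1 - 1 = n' := rfl
  have e2 : m' + 1 - 1 = m' := rfl
  rw [e1, e2]
  calc |pqBernstein2 p₁ q₁ p₂ q₂ (n' + 1) (m' + 1) f x y - f x y|
      = |∑ k ∈ Finset.range (n' + 2), ∑ j ∈ Finset.range (m' + 2),
          pqBasis p₁ q₁ (n' + 1) k x * pqBasis p₂ q₂ (m' + 1) j y *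
            (f (pqNode p₁ q₁ (n' + 1) k) (pqNode p₂ q₂ (m' + 1) j) - f x y)| := by
        rw [hBf]
    _ ≤ ∑ k ∈ Finset.range (n' + 2), ∑ j ∈ Finset.range (m' + 2),
          pqBasis p₁ q₁ (n' + 1) k x * pqBasis p₂ q₂ (m' + 1) j y *
            (supNorm2 (pdx f) * |pqNode p₁ q₁ (n' + 1) k - x|
              + supNorm2 (pdy f) * |pqNode p₂ q₂ (m' + 1) j - y|) := by
        refine le_trans (Finset.abs_sum_le_sum_abs _ _) ?_
        refine Finset.sum_le_sum fun k hk => ?_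
        refine le_trans (Finset.abs_sum_le_sum_abs _ _) ?_
        refine Finset.sum_le_sum fun j hj => ?_
        rw [abs_mul, abs_mul, abs_of_nonneg (hwx k hk), abs_of_nonneg (hwy j hj)]
        rw [mul_assoc, mul_assoc]
        refine mul_le_mul_of_nonneg_left ?_ (hwx k hk)
        refine mul_le_mul_of_nonneg_left ?_ (hwy j hj)
        exact hpt _ (hnx k hk) _ (hny j hj)
    _ = supNorm2 (pdx f) * ∑ k ∈ Finset.range (n' + 2),
            pqBasis p₁ q₁ (n' + 1) k x * |pqNode p₁ q₁ (n' + 1) k - x|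
        + supNorm2 (pdy f) * ∑ j ∈ Finset.range (m' + 2),
            pqBasis p₂ q₂ (m' + 1) j y * |pqNode p₂ q₂ (m' + 1) j - y| := by
        have hinner : ∀ k ∈ Finset.range (n' + 2),
            ∑ j ∈ Finset.range (m' + 2),
              pqBasis p₁ q₁ (n' + 1) k x * pqBasis p₂ q₂ (m' + 1) j y *
                (supNorm2 (pdx f) * |pqNode p₁ q₁ (n' + 1) k - x|
                  + supNorm2 (pdy f) * |pqNode p₂ q₂ (m' + 1) j - y|)
              = pqBasis p₁ q₁ (n' + 1) k x *
                  (supNorm2 (pdx f) * |pqNode p₁ q₁ (n' + 1) k - x|)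
                + pqBasis p₁ q₁ (n' + 1) k x *
                  (supNorm2 (pdy f) * ∑ j ∈ Finset.range (m' + 2),
                    pqBasis p₂ q₂ (m' + 1) j y * |pqNode p₂ q₂ (m' + 1) j - y|) := by
          intro k _
          calc ∑ j ∈ Finset.range (m' + 2),
              pqBasis p₁ q₁ (n' + 1) k x * pqBasis p₂ q₂ (m' + 1) j y *
                (supNorm2 (pdx f) * |pqNode p₁ q₁ (n' + 1) k - x|
                  + supNorm2 (pdy f) * |pqNode p₂ q₂ (m' + 1) j - y|)
              = ∑ j ∈ Finset.range (m' + 2),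
                  (pqBasis p₁ q₁ (n' + 1) k x *
                      (supNorm2 (pdx f) * |pqNode p₁ q₁ (n' + 1) k - x|) *
                      pqBasis p₂ q₂ (m' + 1) j y
                    + pqBasis p₁ q₁ (n' + 1) k x *
                      (supNorm2 (pdy f) *
                        (pqBasis p₂ q₂ (m' + 1) j y * |pqNode p₂ q₂ (m' + 1) j - y|))) :=
              Finset.sum_congr rfl fun j _ => by ring
            _ = pqBasis p₁ q₁ (n' + 1) k x *
                  (supNorm2 (pdx f) * |pqNode p₁ q₁ (n' + 1) k - x|) *
                  (∑ j ∈ Finset.range (m' + 2), pqBasis p₂ q₂ (m' + 1) j y)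
                + pqBasis p₁ q₁ (n' + 1) k x *
                  (supNorm2 (pdy f) * ∑ j ∈ Finset.range (m' + 2),
                    pqBasis p₂ q₂ (m' + 1) j y * |pqNode p₂ q₂ (m' + 1) j - y|) := by
              rw [Finset.sum_add_distrib, ← Finset.mul_sum, ← Finset.mul_sum, ← Finset.mul_sum]
            _ = _ := by rw [hswy, mul_one]
        rw [Finset.sum_congr rfl hinner, Finset.sum_add_distrib, ← Finset.sum_mul, hswx,
          one_mul]
        congr 1
        rw [Finset.mul_sum]
        exact Finset.sum_congr rfl fun k _ => by ring
    _ ≤ _ := add_le_add (mul_le_mul_of_nonneg_left hCSx hMx0)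
          (mul_le_mul_of_nonneg_left hCSy hMy0)
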